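/- The group S_h × {id} × Ω is regular if and only if h is odd. -/

import Mathlib

/-- A preference profile: each individual `i : Fin h` has a linear order on the `n`
alternatives, identified with the permutation of `Fin n` mapping ranks to alternatives. -/
abbrev Profile (h n : Nat) := Fin h → Equiv.Perm (Fin n)

/-- The order-reversing permutation `ρ₀`. -/
def rho0 (n : Nat) : Equiv.Perm (Fin n) := Fin.revPerm

/-- The subgroup `Ω = {id, ρ₀}` of `S_n` (generated by `ρ₀`, which has order 2). -/
def Omega (n : Nat) : Subgroup (Equiv.Perm (Fin n)) := Subgroup.zpowers (rho0 n)

/-- `ρ₀` as an element of `Ω`. -/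
def omegaRho0 (n : Nat) : Omega n := ⟨rho0 n, Subgroup.mem_zpowers _⟩

/-- The group `G = S_h × S_n × Ω`. -/
abbrev GG (h n : Nat) := Equiv.Perm (Fin h) × Equiv.Perm (Fin n) × (Omega n)

/-- The action of `(φ, ψ, ρ) ∈ G` on a profile: `(p^{(φ,ψ,ρ)})_i = ψ p_{φ⁻¹(i)} ρ`. -/
def act {h n : Nat} (g : GG h n) (p : Profile h n) : Profile h n :=
  fun i => g.2.1 * p (g.1⁻¹ i) * (g.2.2 : Equiv.Perm (Fin n))

/-- A rule `F` is `U`-symmetric if `F(p^{(φ,ψ,ρ)}) = ψ F(p) ρ` for all `p` and `(φ,ψ,ρ) ∈ U`. -/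
def USymm {h n : Nat} (U : Set (GG h n)) (F : Profile h n → Equiv.Perm (Fin n)) : Prop :=
  ∀ p : Profile h n, ∀ g ∈ U, F (act g p) = g.2.1 * F p * (g.2.2 : Equiv.Perm (Fin n))

/-- `S₁^U(p) = { q : ψ q ρ = q for all (φ,ψ,ρ) in the stabilizer of p in U }`. -/
def S1set {h n : Nat} (U : Set (GG h n)) (p : Profile h n) : Set (Equiv.Perm (Fin n)) :=
  {q | ∀ g ∈ U, act g p = p → g.2.1 * q * (g.2.2 : Equiv.Perm (Fin n)) = q}

/-- Regularity of `U`: for every profile `p` there is `ψ*` conjugate to `ρ₀` with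
`Stab_U(p) ⊆ (S_h × {id} × {id}) ∪ (S_h × {ψ*} × {ρ₀})`. -/
def Regular {h n : Nat} (U : Set (GG h n)) : Prop :=
  ∀ p : Profile h n, ∃ ψs : Equiv.Perm (Fin n), IsConj (rho0 n) ψs ∧
    ∀ g ∈ U, act g p = p →
      (g.2.1 = 1 ∧ (g.2.2 : Equiv.Perm (Fin n)) = 1) ∨
      (g.2.1 = ψs ∧ (g.2.2 : Equiv.Perm (Fin n)) = rho0 n)

/-- Number of individuals strictly preferring `x` to `y` in profile `p`
(smaller rank = better, since permutations send ranks to alternatives). -/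
def prefCount {h n : Nat} (p : Profile h n) (x y : Fin n) : Nat :=
  (Finset.univ.filter fun i => (p i)⁻¹ x < (p i)⁻¹ y).card

/-- `C_ν(p)`: linear orders consistent with the `ν`-majority principle applied to `p`. -/
def Cset {h n : Nat} (p : Profile h n) (ν : Nat) : Set (Equiv.Perm (Fin n)) :=
  {q | ∀ x y : Fin n, ν ≤ prefCount p x y → q⁻¹ x < q⁻¹ y}

/-- `ν(p)`: the minimal majority threshold `ν ∈ ℕ ∩ (h/2, h]` with `C_ν(p) ≠ ∅`. -/
noncomputable def nuMin {h n : Nat} (p : Profile h n) : Nat :=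
  sInf {ν : Nat | h < 2 * ν ∧ ν ≤ h ∧ (Cset p ν).Nonempty}

/-- minimal majority rule. -/
def MinMaj {h n : Nat} (F : Profile h n → Equiv.Perm (Fin n)) : Prop :=
  ∀ p : Profile h n, F p ∈ Cset p (nuMin p)

/-- `gcd(T(φ))`: the gcd of the lengths of the orbits (cycles) of `φ`. -/
noncomputable def gcdOrbits {h : Nat} (phi : Equiv.Perm (Fin h)) : Nat :=
  Finset.univ.gcd fun i => Function.minimalPeriod (⇑phi) i


-- Auxiliary lemmas

lemma rho0_sq {n : Nat} : rho0 n * rho0 n = 1 := by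
  ext i
  simp [rho0, Fin.rev_rev]

lemma rho0_ne_one {n : Nat} (hn : 2 ≤ n) : rho0 n ≠ 1 := by
  intro h1
  have h0 : (0 : Nat) < n := by omega
  have := congrArg (fun f => (f ⟨0, h0⟩ : Fin n).val) h1
  simp [rho0, Fin.rev] at this
  omega

lemma omega_cases {n : Nat} (x : Equiv.Perm (Fin n)) (hx : x ∈ Omega n) :
    x = 1 ∨ x = rho0 n := by
  obtain ⟨k, hk⟩ := hx
  have hk' : (rho0 n) ^ k = x := hk
  rcases Int.even_or_odd k with ⟨m, hm⟩ | ⟨m, hm⟩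
  · left
    rw [← hk', hm]
    have : (rho0 n) ^ (m + m) = ((rho0 n) ^ (2 : ℤ)) ^ m := by
      rw [← zpow_mul]; ring_nf
    rw [this]
    have h2 : (rho0 n) ^ (2 : ℤ) = 1 := by
      rw [show (2:ℤ) = (2:ℕ) by norm_num, zpow_natCast, pow_two, rho0_sq]
    rw [h2, one_zpow]
  · right
    rw [← hk', hm]
    have : (rho0 n) ^ (2 * m + 1) = ((rho0 n) ^ (2 : ℤ)) ^ m * rho0 n := by
      rw [← zpow_mul, zpow_add_one]
    rw [this]
    have h2 : (rho0 n) ^ (2 : ℤ) = 1 := by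
      rw [show (2:ℤ) = (2:ℕ) by norm_num, zpow_natCast, pow_two, rho0_sq]
    rw [h2, one_zpow, one_mul]

lemma even_of_reversal {h n : Nat} (hn : 2 ≤ n) (phi : Equiv.Perm (Fin h))
    (p : Profile h n) (hp : ∀ i, p (phi⁻¹ i) * rho0 n = p i) : Even h := by
  classical
  let e := Fintype.equivFin (Equiv.Perm (Fin n))
  have hne : ∀ q : Equiv.Perm (Fin n), q ≠ q * rho0 n := by
    intro q hq
    nth_rewrite 1 [← mul_one q] at hq
    exact rho0_ne_one hn (mul_left_cancel hq).symm
  set c : Equiv.Perm (Fin n) → Prop := fun q => e q < e (q * rho0 n) with hc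
  have hkey : ∀ q, c (q * rho0 n) ↔ ¬ c q := by
    intro q
    have hqq : q * rho0 n * rho0 n = q := by rw [mul_assoc, rho0_sq, mul_one]
    have hne' : e q ≠ e (q * rho0 n) := fun hEq => hne q (e.injective hEq)
    simp only [hc, hqq]
    constructor
    · intro hlt hlt'
      exact absurd (lt_trans hlt hlt') (lt_irrefl _)
    · intro hnlt
      rcases lt_or_gt_of_ne hne' with h1 | h1
      · exact absurd h1 hnlt
      · exact h1
  set A : Finset (Fin h) := Finset.univ.filter (fun i => c (p i)) with hA
  have hcard : A.card = (Finset.univ.filter (fun i => ¬ c (p i))).card := by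
    apply Finset.card_bij' (fun i _ => phi⁻¹ i) (fun j _ => phi j)
    · intro i hi
      simp only [hA, Finset.mem_filter, Finset.mem_univ, true_and] at hi ⊢
      rw [← hp i] at hi
      exact (hkey _).mp hi
    · intro j hj
      simp only [hA, Finset.mem_filter, Finset.mem_univ, true_and] at hj ⊢
      have := hp (phi j)
      rw [show phi⁻¹ (phi j) = j from phi.symm_apply_apply j] at this
      rw [← this]
      exact (hkey _).mpr hj
    · intro i _; simp
    · intro j _; simp
  have htotal : A.card + (Finset.univ.filter (fun i => ¬ c (p i))).card = h := by
    rw [hA, Finset.card_filter_add_card_filter_not]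
    simp
  refine ⟨A.card, ?_⟩
  omega

theorem stmt16 {h n : Nat} (hh : 2 ≤ h) (hn : 2 ≤ n) :
    Regular {g : GG h n | g.2.1 = 1} ↔ Odd h := by
  constructor
  · -- Regular → Odd h
    intro hreg
    by_contra hodd
    have heven : Even h := Nat.not_odd_iff_even.mp hodd
    obtain ⟨m, hm⟩ := heven
    -- construct the involution swapping 2k and 2k+1
    have hswap : ∀ i : Fin h, (if Even i.val then i.val + 1 else i.val - 1) < h := by
      intro i
      rcases Nat.even_or_odd i.val with he | ho
      · simp only [if_pos he]
        obtain ⟨k, hk⟩ := he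
        have := i.isLt
        omega
      · simp only [if_neg (Nat.not_even_iff_odd.mpr ho)]
        have := i.isLt
        omega
    let f : Fin h → Fin h := fun i => ⟨if Even i.val then i.val + 1 else i.val - 1, hswap i⟩
    have hinv : Function.Involutive f := by
      intro i
      rcases Nat.even_or_odd i.val with he | ho
      · have h1 : f i = ⟨i.val + 1, by simpa [f, if_pos he] using hswap i⟩ := by
          simp [f, if_pos he]
        rw [h1]
        have hodd1 : ¬ Even (i.val + 1) := by
          simp [Nat.even_add_one, he]
        simp [f, if_neg hodd1]
      · have hne : ¬ Even i.val := Nat.not_even_iff_odd.mpr ho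
        have hpos : 1 ≤ i.val := by
          rcases ho with ⟨k, hk⟩; omega
        have h1 : f i = ⟨i.val - 1, by simpa [f, if_neg hne] using hswap i⟩ := by
          simp [f, if_neg hne]
        rw [h1]
        have he1 : Even (i.val - 1) := by
          rcases ho with ⟨k, hk⟩
          exact ⟨k, by omega⟩
        apply Fin.ext
        show (if Even (i.val - 1) then i.val - 1 + 1 else i.val - 1 - 1) = i.val
        rw [if_pos he1]
        omega
    let phi : Equiv.Perm (Fin h) := hinv.toPerm f
    let p : Profile h n := fun i => if Even i.val then 1 else rho0 n
    have hstab : act (phi, 1, omegaRho0 n) p = p := by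
      funext i
      have hphi_inv : phi⁻¹ i = f i := by
        rw [Equiv.Perm.inv_eq_iff_eq]
        exact (hinv i).symm
      simp only [act, one_mul, hphi_inv, omegaRho0]
      rcases Nat.even_or_odd i.val with he | ho
      · have hodd1 : ¬ Even ((f i : Fin h).val) := by
          simp [f, if_pos he, Nat.even_add_one, he]
        simp only [p, if_neg hodd1, if_pos he]
        exact rho0_sq
      · have hne : ¬ Even i.val := Nat.not_even_iff_odd.mpr ho
        have he1 : Even ((f i : Fin h).val) := by
          rcases ho with ⟨k, hk⟩
          simp only [f, if_neg hne]
          exact ⟨k, by omega⟩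
        simp only [p, if_pos he1, if_neg hne, one_mul]
    obtain ⟨ψs, hconj, hU⟩ := hreg p
    have hmem : (phi, 1, omegaRho0 n) ∈ {g : GG h n | g.2.1 = 1} := rfl
    rcases hU (phi, 1, omegaRho0 n) hmem hstab with ⟨_, h2⟩ | ⟨h1, _⟩
    · exact rho0_ne_one hn h2
    · have hpsi1 : ψs = 1 := h1.symm
      rw [hpsi1, isConj_iff] at hconj
      obtain ⟨c, hc⟩ := hconj
      rw [mul_inv_eq_one] at hc
      exact rho0_ne_one hn (mul_left_cancel (hc.trans (mul_one c).symm))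
  · -- Odd h → Regular
    intro hodd p
    refine ⟨rho0 n, IsConj.refl _, ?_⟩
    rintro ⟨phi, psi, rho⟩ hmem hstab
    have hpsi : psi = 1 := hmem
    rcases omega_cases (rho : Equiv.Perm (Fin n)) rho.2 with h1 | h1
    · exact Or.inl ⟨hpsi, h1⟩
    · exfalso
      have hp : ∀ i, p (phi⁻¹ i) * rho0 n = p i := by
        intro i
        have := congrFun hstab i
        simp only [act, hpsi, one_mul, h1] at this
        exact this
      have := even_of_reversal hn phi p hp
      exact (Nat.not_even_iff_odd.mpr hodd) this
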